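/- Let G=(V,E) be a finite graph, S={1,…,s}, and fix parameters p∈[0,1), q>0, a_1,…,a_s∈(0,1) summing to 1. For any vertex v∈V, any spin m∈S, and any σ∈S^{V∖{v}}, the conditional probability under the DaC measure that v gets spin m given that the spins on V∖{v} equal σ is at least ε = (min_i a_i)·(min{1-p, 1-p/(p+(1-p)q·min_i a_i)})^{deg(v)} > 0. -/

import Mathlib

open Finset

/-- The relation on vertices generated by the open edges of a bond configuration `η`. -/
def openRel {V E : Type} (ends : E → V × V) (η : E → Bool) (x y : V) : Prop :=
  ∃ e, η e = true ∧ (ends e).1 = x ∧ (ends e).2 = y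

/-- The number of connected components of the graph `(V, {e : η e = 1})`. -/
noncomputable def numComp {V E : Type} (ends : E → V × V) (η : E → Bool) : ℕ :=
  Nat.card (Quot (openRel ends η))

/-- The unnormalized random-cluster weight `q^{k(η)} ∏_e p^{η(e)}(1-p)^{1-η(e)}`. -/
noncomputable def rcWeight {V E : Type} [Fintype E] (ends : E → V × V) (p q : ℝ)
    (η : E → Bool) : ℝ :=
  q ^ numComp ends η * ∏ e : E, (if η e then p else 1 - p)

/-- The random-cluster normalizing constant `Z^G_{p,q}`. -/
noncomputable def rcZ {V E : Type} [Fintype E] [DecidableEq E] (ends : E → V × V)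
    (p q : ℝ) : ℝ :=
  ∑ η : E → Bool, rcWeight ends p q η

/-- The random-cluster measure `Φ^G_{p,q}` on `{0,1}^E`. -/
noncomputable def rcMeasure {V E : Type} [Fintype E] [DecidableEq E] (ends : E → V × V)
    (p q : ℝ) (η : E → Bool) : ℝ :=
  rcWeight ends p q η / rcZ ends p q

/-- A spin configuration `σ` is constant on each connected component of `η`. -/
def compatible {V E : Type} (ends : E → V × V) (η : E → Bool) {s : ℕ}
    (σ : V → Fin s) : Prop :=
  ∀ x y, Relation.EqvGen (openRel ends η) x y → σ x = σ y

/-- The number `k^{σ,i}(η)` of connected components of `η` containing a vertex of spin `i`. -/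
noncomputable def spinCompCount {V E : Type} (ends : E → V × V) (η : E → Bool) {s : ℕ}
    (σ : V → Fin s) (i : Fin s) : ℕ :=
  Nat.card {c : Quot (openRel ends η) // ∃ x, Quot.mk (openRel ends η) x = c ∧ σ x = i}

open Classical in
/-- The divide-and-color measure `P^G` on `S^V × {0,1}^E`. -/
noncomputable def dacP {V E : Type} [Fintype E] [DecidableEq E] (ends : E → V × V)
    (p q : ℝ) {s : ℕ} (a : Fin s → ℝ) (σ : V → Fin s) (η : E → Bool) : ℝ :=
  if compatible ends η σ then
    rcMeasure ends p q η * ∏ i : Fin s, (a i) ^ spinCompCount ends η σ i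
  else 0

open Relation Function
open Relation

section Generic
variable {α : Type} (r : α → α → Prop) (x y : α)

lemma eqvGen_sup_pair (u w : α) :
    EqvGen (fun u w => r u w ∨ (u = x ∧ w = y)) u w ↔
      EqvGen r u w ∨ (EqvGen r u x ∧ EqvGen r y w) ∨ (EqvGen r u y ∧ EqvGen r x w) := by
  constructor
  · intro h
    induction h with
    | rel u w h =>
      rcases h with h | ⟨rfl, rfl⟩
      · exact Or.inl (EqvGen.rel _ _ h)
      · exact Or.inr (Or.inl ⟨EqvGen.refl _, EqvGen.refl _⟩)
    | refl u => exact Or.inl (EqvGen.refl _)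
    | symm u w _ ih =>
      rcases ih with h | ⟨h1, h2⟩ | ⟨h1, h2⟩
      · exact Or.inl h.symm
      · exact Or.inr (Or.inr ⟨h2.symm, h1.symm⟩)
      · exact Or.inr (Or.inl ⟨h2.symm, h1.symm⟩)
    | trans u v w _ _ ih1 ih2 =>
      rcases ih1 with h | ⟨h1, h2⟩ | ⟨h1, h2⟩ <;>
        rcases ih2 with g | ⟨g1, g2⟩ | ⟨g1, g2⟩
      · exact Or.inl (h.trans _ _ _ g)
      · exact Or.inr (Or.inl ⟨h.trans _ _ _ g1, g2⟩)
      · exact Or.inr (Or.inr ⟨h.trans _ _ _ g1, g2⟩)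
      · exact Or.inr (Or.inl ⟨h1, h2.trans _ _ _ g⟩)
      · exact Or.inl ((h1.trans _ _ _ (h2.trans _ _ _ g1).symm).trans _ _ _ g2)
      · exact Or.inl (h1.trans _ _ _ g2)
      · exact Or.inr (Or.inr ⟨h1, h2.trans _ _ _ g⟩)
      · exact Or.inl (h1.trans _ _ _ g2)
      · exact Or.inl ((h1.trans _ _ _ (h2.trans _ _ _ g1).symm).trans _ _ _ g2)
  · have hxy : EqvGen (fun u w => r u w ∨ (u = x ∧ w = y)) x y :=
      EqvGen.rel _ _ (Or.inr ⟨rfl, rfl⟩)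
    have hm : ∀ a b, EqvGen r a b → EqvGen (fun u w => r u w ∨ (u = x ∧ w = y)) a b :=
      fun a b h => h.mono (fun a b hab => Or.inl hab)
    rintro (h | ⟨h1, h2⟩ | ⟨h1, h2⟩)
    · exact hm _ _ h
    · exact ((hm _ _ h1).trans _ _ _ hxy).trans _ _ _ (hm _ _ h2)
    · exact ((hm _ _ h1).trans _ _ _ hxy.symm).trans _ _ _ (hm _ _ h2)
end Generic

/-- a surjection which is 2-to-1 at exactly one point -/
lemma nat_card_eq_succ_of {A B : Type} [Finite A] (f : A → B) (hsurj : Surjective f)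
    (a₁ a₂ : A) (hne : a₁ ≠ a₂) (heq : f a₁ = f a₂)
    (hfib : ∀ u w, f u = f w → u = w ∨ (u = a₁ ∧ w = a₂) ∨ (u = a₂ ∧ w = a₁)) :
    Nat.card A = Nat.card B + 1 := by
  classical
  have hbij : Function.Bijective (fun a : {a : A // a ≠ a₂} => f a.1) := by
    constructor
    · rintro ⟨a, ha⟩ ⟨a', ha'⟩ h
      rcases hfib a a' h with h | ⟨rfl, rfl⟩ | ⟨rfl, h'⟩
      · exact Subtype.ext h
      · exact absurd rfl ha'
      · exact absurd rfl ha
    · intro b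
      obtain ⟨a, rfl⟩ := hsurj b
      by_cases h : a = a₂
      · exact ⟨⟨a₁, hne⟩, by simp only []; rw [heq, h]⟩
      · exact ⟨⟨a, h⟩, rfl⟩
  have hB : Nat.card B = Nat.card {a : A // a ≠ a₂} := (Nat.card_eq_of_bijective _ hbij).symm
  haveI : Fintype A := Fintype.ofFinite A
  have h1 : Nat.card {a : A // a ≠ a₂} = Fintype.card A - 1 := by
    rw [Nat.card_eq_fintype_card]
    have := Fintype.card_subtype_compl (fun a : A => a = a₂)
    simpa [Fintype.card_subtype_eq] using this
  have h2 : 1 ≤ Fintype.card A := Fintype.card_pos_iff.mpr ⟨a₁⟩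
  rw [hB, h1, Nat.card_eq_fintype_card]
  omega

section QuotApp
variable {α : Type} [Finite α] (r : α → α → Prop) (x y : α)

local notation "r'" => (fun u w => r u w ∨ (u = x ∧ w = y))

noncomputable instance : ∀ (t : α → α → Prop), Finite (Quot t) := fun t =>
  Finite.of_surjective (Quot.mk t) (Quot.mk_surjective)

/-- the canonical surjection between the quotients -/
def quotMap : Quot r → Quot r' :=
  Quot.lift (Quot.mk r') (fun a b hab => Quot.sound (Or.inl hab))

lemma quotMap_mk (z : α) : quotMap r x y (Quot.mk r z) = Quot.mk r' z := rfl

lemma quotMap_surj : Surjective (quotMap r x y) := by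
  intro c
  induction c using Quot.ind with
  | _ z => exact ⟨Quot.mk r z, rfl⟩

lemma quotMap_fib (u w : Quot r) (h : quotMap r x y u = quotMap r x y w) :
    u = w ∨ (u = Quot.mk r x ∧ w = Quot.mk r y) ∨ (u = Quot.mk r y ∧ w = Quot.mk r x) := by
  induction u using Quot.ind with
  | _ z =>
    induction w using Quot.ind with
    | _ z' =>
      rw [quotMap_mk, quotMap_mk, Quot.eq] at h
      rw [eqvGen_sup_pair] at h
      rcases h with h | ⟨h1, h2⟩ | ⟨h1, h2⟩
      · exact Or.inl (Quot.eq.mpr h)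
      · exact Or.inr (Or.inl ⟨Quot.eq.mpr h1, Quot.eq.mpr h2.symm⟩)
      · exact Or.inr (Or.inr ⟨Quot.eq.mpr h1, Quot.eq.mpr h2.symm⟩)

/-- if x,y are not yet connected, the number of components drops by one -/
lemma card_quot_pair_of_not_rel (h : ¬ EqvGen r x y) :
    Nat.card (Quot r) = Nat.card (Quot r') + 1 := by
  refine nat_card_eq_succ_of (quotMap r x y) (quotMap_surj r x y)
    (Quot.mk r x) (Quot.mk r y) (fun hc => h (Quot.eq.mp hc)) ?_ (quotMap_fib r x y)
  rw [quotMap_mk, quotMap_mk]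
  exact Quot.sound (Or.inr ⟨rfl, rfl⟩)

/-- if x,y are already connected, quotients are in bijection -/
lemma quotMap_bij (h : EqvGen r x y) : Bijective (quotMap r x y) := by
  refine ⟨fun u w huw => ?_, quotMap_surj r x y⟩
  rcases quotMap_fib r x y u w huw with h' | ⟨rfl, rfl⟩ | ⟨rfl, rfl⟩
  · exact h'
  · exact Quot.eq.mpr h
  · exact Quot.eq.mpr h.symm

lemma card_quot_pair_of_rel (h : EqvGen r x y) :
    Nat.card (Quot r) = Nat.card (Quot r') :=
  Nat.card_eq_of_bijective _ (quotMap_bij r x y h)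
end QuotApp
section SpinCount
open Relation Function
variable {α : Type} [Finite α] (r : α → α → Prop) (x y : α) {s : ℕ} (σ : α → Fin s)

local notation "r'" => (fun u w => r u w ∨ (u = x ∧ w = y))

/-- when x,y already connected: all spin component counts agree -/
lemma spin_card_of_rel (h : EqvGen r x y) (i : Fin s) :
    Nat.card {c : Quot r // ∃ z, Quot.mk r z = c ∧ σ z = i}
      = Nat.card {c : Quot r' // ∃ z, Quot.mk r' z = c ∧ σ z = i} := by
  have hE : ∀ u w, EqvGen r' u w ↔ EqvGen r u w := by
    intro u w
    rw [eqvGen_sup_pair]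
    constructor
    · rintro (h' | ⟨h1, h2⟩ | ⟨h1, h2⟩)
      · exact h'
      · exact (h1.trans _ _ _ h).trans _ _ _ h2
      · exact (h1.trans _ _ _ h.symm).trans _ _ _ h2
    · exact Or.inl
  refine Nat.card_eq_of_bijective
    (fun c => ⟨quotMap r x y c.1, ?_⟩) ⟨?_, ?_⟩
  · obtain ⟨z, hz, hzi⟩ := c.2
    exact ⟨z, by rw [← hz, quotMap_mk], hzi⟩
  · rintro ⟨c, hc⟩ ⟨c', hc'⟩ hcc
    have : quotMap r x y c = quotMap r x y c' := congrArg Subtype.val hcc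
    exact Subtype.ext ((quotMap_bij r x y h).1 this)
  · rintro ⟨c', z, hz, hzi⟩
    exact ⟨⟨Quot.mk r z, z, rfl, hzi⟩, Subtype.ext ((quotMap_mk r x y z).trans hz)⟩

/-- when x,y not connected and i is not the spin of x: counts agree -/
lemma spin_card_of_not_rel_ne (hσ : ∀ u w, EqvGen r' u w → σ u = σ w) (h : ¬ EqvGen r x y) (i : Fin s) (hi : i ≠ σ x) :
    Nat.card {c : Quot r // ∃ z, Quot.mk r z = c ∧ σ z = i}
      = Nat.card {c : Quot r' // ∃ z, Quot.mk r' z = c ∧ σ z = i} := by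
  have hσr : ∀ u w, EqvGen r u w → σ u = σ w := fun u w h' =>
    hσ u w (h'.mono fun a b hab => Or.inl hab)
  have hxy' : σ x = σ y := hσ x y (EqvGen.rel _ _ (Or.inr ⟨rfl, rfl⟩))
  refine Nat.card_eq_of_bijective (fun c => ⟨quotMap r x y c.1, ?_⟩) ⟨?_, ?_⟩
  · obtain ⟨z, hz, hzi⟩ := c.2
    exact ⟨z, by rw [← hz, quotMap_mk], hzi⟩
  · rintro ⟨c, z, hz, hzi⟩ ⟨c', z', hz', hzi'⟩ hcc
    have hval : quotMap r x y c = quotMap r x y c' := congrArg Subtype.val hcc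
    rcases quotMap_fib r x y c c' hval with h' | ⟨rfl, h2⟩ | ⟨rfl, h2⟩
    · exact Subtype.ext h'
    · exact absurd (hzi.symm.trans (hσr z x (Quot.eq.mp hz))) hi
    · exact absurd ((hzi.symm.trans (hσr z y (Quot.eq.mp hz))).trans hxy'.symm) hi
  · rintro ⟨c', z, hz, hzi⟩
    exact ⟨⟨Quot.mk r z, z, rfl, hzi⟩, Subtype.ext ((quotMap_mk r x y z).trans hz)⟩

/-- when x,y not connected: the count of components of spin (σ x) drops by one -/
lemma spin_card_of_not_rel_eq (hσ : ∀ u w, EqvGen r' u w → σ u = σ w) (h : ¬ EqvGen r x y) :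
    Nat.card {c : Quot r // ∃ z, Quot.mk r z = c ∧ σ z = σ x}
      = Nat.card {c : Quot r' // ∃ z, Quot.mk r' z = c ∧ σ z = σ x} + 1 := by
  have hxy' : σ x = σ y := hσ x y (EqvGen.rel _ _ (Or.inr ⟨rfl, rfl⟩))
  refine nat_card_eq_succ_of (B := {c : Quot r' // ∃ z, Quot.mk r' z = c ∧ σ z = σ x})
    (fun c => ⟨quotMap r x y c.1, by
      obtain ⟨z, hz, hzi⟩ := c.2
      exact ⟨z, by rw [← hz, quotMap_mk], hzi⟩⟩)
    ?_ ⟨Quot.mk r x, x, rfl, rfl⟩ ⟨Quot.mk r y, y, rfl, hxy'.symm⟩ ?_ ?_ ?_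
  · rintro ⟨c', z, hz, hzi⟩
    exact ⟨⟨Quot.mk r z, z, rfl, hzi⟩, Subtype.ext ((quotMap_mk r x y z).trans hz)⟩
  · intro hc
    exact h (Quot.eq.mp (congrArg Subtype.val hc))
  · exact Subtype.ext (Quot.sound (Or.inr ⟨rfl, rfl⟩))
  · rintro ⟨c, hc⟩ ⟨c', hc'⟩ hcc
    have hval : quotMap r x y c = quotMap r x y c' := congrArg Subtype.val hcc
    rcases quotMap_fib r x y c c' hval with h' | ⟨rfl, rfl⟩ | ⟨rfl, rfl⟩
    · exact Or.inl (Subtype.ext h')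
    · exact Or.inr (Or.inl ⟨rfl, rfl⟩)
    · exact Or.inr (Or.inr ⟨rfl, rfl⟩)
end SpinCount
section Graph
open Relation Function Finset

variable {V E : Type} [Fintype V] [DecidableEq V] [Fintype E] [DecidableEq E]
  (ends : E → V × V)

lemma openRel_update_eq (η : E → Bool) (e : E) (hη : η e = false) :
    openRel ends (Function.update η e true)
      = fun u w => openRel ends η u w ∨ (u = (ends e).1 ∧ w = (ends e).2) := by
  funext u w
  apply propext
  constructor
  · rintro ⟨e', he', h1, h2⟩
    by_cases h : e' = e
    · subst h
      exact Or.inr ⟨h1.symm, h2.symm⟩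
    · rw [Function.update_of_ne h] at he'
      exact Or.inl ⟨e', he', h1, h2⟩
  · rintro (⟨e', he', h1, h2⟩ | ⟨rfl, rfl⟩)
    · have h : e' ≠ e := fun hh => by rw [hh, hη] at he'; exact Bool.noConfusion he'
      exact ⟨e', by rw [Function.update_of_ne h]; exact he', h1, h2⟩
    · exact ⟨e, Function.update_self e true η, rfl, rfl⟩

open Classical in
/-- The unnormalized DaC weight. -/
noncomputable def uW {V E : Type} [Fintype V] [Fintype E] (ends : E → V × V) (p q : ℝ) {s : ℕ} (a : Fin s → ℝ) (τ : V → Fin s) (η : E → Bool) : ℝ :=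
  if compatible ends η τ then
    q ^ numComp ends η * (∏ e : E, if η e then p else 1 - p)
      * ∏ i : Fin s, a i ^ spinCompCount ends η τ i
  else 0

variable {p q : ℝ} {s : ℕ} {a : Fin s → ℝ}

lemma uW_nonneg (hp0 : 0 ≤ p) (hp1 : p < 1) (hq : 0 < q) (ha : ∀ i, 0 < a i)
    (τ : V → Fin s) (η : E → Bool) : 0 ≤ uW ends p q a τ η := by
  unfold uW
  split
  · refine mul_nonneg (mul_nonneg (pow_nonneg hq.le _) (Finset.prod_nonneg fun e _ => ?_))
      (Finset.prod_nonneg fun i _ => pow_nonneg (ha i).le _)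
    split <;> linarith
  · exact le_rfl
end Graph
section PerEdge
open Relation Function Finset

variable {V E : Type} [Fintype V] [DecidableEq V] [Fintype E] [DecidableEq E]
  (ends : E → V × V) {p q : ℝ} {s : ℕ} {a : Fin s → ℝ}

lemma uW_update_le (hp0 : 0 ≤ p) (hp1 : p < 1) (hq : 0 < q) (ha : ∀ i, 0 < a i)
    {amin c : ℝ} (hamin_pos : 0 < amin) (hamin_le : ∀ i, amin ≤ a i)
    (hc0 : 0 < c) (hc1 : c ≤ 1 - p) (hc2 : c ≤ 1 - p / (p + (1 - p) * q * amin))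
    (τ : V → Fin s) (η : E → Bool) (e : E) (hη : η e = false) :
    c * (uW ends p q a τ η + uW ends p q a τ (Function.update η e true))
      ≤ uW ends p q a τ η := by
  classical
  set η' := Function.update η e true with hη'def
  have hrel := openRel_update_eq ends η e hη
  set x := (ends e).1
  set y := (ends e).2
  by_cases hcomp' : compatible ends η' τ
  · have hcomp : compatible ends η τ := by
      intro u w h
      apply hcomp' u w
      rw [hrel]
      exact h.mono (fun a b hab => Or.inl hab)
    -- edge products
    have hsplit : ∀ ξ : E → Bool, (∏ e' : E, if ξ e' then p else 1 - p)
        = (if ξ e then p else 1 - p) * ∏ e' ∈ univ \ {e}, (if ξ e' then p else 1 - p) :=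
      fun ξ => Finset.prod_eq_mul_prod_sdiff_singleton_of_mem (mem_univ e) _
    set P := ∏ e' ∈ univ \ {e}, (if η e' then p else 1 - p) with hPdef
    have hPe : (∏ e' ∈ univ \ {e}, (if η' e' then p else 1 - p)) = P := by
      refine Finset.prod_congr rfl fun e' he' => ?_
      rw [hη'def, Function.update_of_ne (by simpa using (Finset.mem_sdiff.mp he').2)]
    have hprod : (∏ e' : E, if η e' then p else 1 - p) = (1 - p) * P := by
      rw [hsplit η, hη]; simp [hPdef]
    have hprod' : (∏ e' : E, if η' e' then p else 1 - p) = p * P := by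
      rw [hsplit η', hPe]
      simp [hη'def]
    have hP : 0 ≤ P := Finset.prod_nonneg fun e' _ => by split <;> linarith
    unfold uW
    rw [if_pos hcomp', if_pos hcomp, hprod, hprod']
    by_cases hconn : EqvGen (openRel ends η) x y
    · have hk : numComp ends η' = numComp ends η := by
        unfold numComp; rw [hrel]; exact (card_quot_pair_of_rel _ x y hconn).symm
      have hsp : ∀ i, spinCompCount ends η' τ i = spinCompCount ends η τ i := by
        intro i; unfold spinCompCount; rw [hrel]
        exact (spin_card_of_rel _ x y τ hconn i).symm
      rw [hk]
      have hA : (∏ i : Fin s, a i ^ spinCompCount ends η' τ i)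
          = ∏ i : Fin s, a i ^ spinCompCount ends η τ i :=
        Finset.prod_congr rfl fun i _ => by rw [hsp]
      rw [hA]
      have hK : 0 ≤ q ^ numComp ends η * P * ∏ i : Fin s, a i ^ spinCompCount ends η τ i :=
        mul_nonneg (mul_nonneg (pow_nonneg hq.le _) hP)
          (Finset.prod_nonneg fun i _ => pow_nonneg (ha i).le _)
      nlinarith [mul_nonneg (sub_nonneg.2 hc1) hK]
    · have hσ' : ∀ u w, EqvGen (fun u w => openRel ends η u w ∨ (u = x ∧ w = y)) u w
          → τ u = τ w := by
        intro u w h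
        apply hcomp' u w
        rw [hrel]; exact h
      have hk : numComp ends η = numComp ends η' + 1 := by
        unfold numComp; rw [hrel]; exact card_quot_pair_of_not_rel _ x y hconn
      have hspt : spinCompCount ends η τ (τ x) = spinCompCount ends η' τ (τ x) + 1 := by
        unfold spinCompCount; rw [hrel]
        exact spin_card_of_not_rel_eq _ x y τ hσ' hconn
      have hspne : ∀ i, i ≠ τ x → spinCompCount ends η τ i = spinCompCount ends η' τ i := by
        intro i hi
        unfold spinCompCount; rw [hrel]
        exact spin_card_of_not_rel_ne _ x y τ hσ' hconn i hi
      have hA : (∏ i : Fin s, a i ^ spinCompCount ends η τ i)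
          = a (τ x) * ∏ i : Fin s, a i ^ spinCompCount ends η' τ i := by
        have : ∀ i : Fin s, a i ^ spinCompCount ends η τ i
            = (if i = τ x then a i else 1) * a i ^ spinCompCount ends η' τ i := by
          intro i
          by_cases hi : i = τ x
          · subst hi; rw [hspt, if_pos rfl, pow_succ]; ring
          · rw [hspne i hi, if_neg hi, one_mul]
        rw [Finset.prod_congr rfl (fun i _ => this i), Finset.prod_mul_distrib,
          Finset.prod_ite_eq' univ (τ x) a, if_pos (mem_univ _)]
      rw [hA, hk]
      set t := a (τ x) with htdef
      have ht : amin ≤ t := hamin_le _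
      have ht0 : 0 < t := ha _
      set k' := numComp ends η'
      set A' := ∏ i : Fin s, a i ^ spinCompCount ends η' τ i with hA'def
      have hA' : 0 ≤ A' := Finset.prod_nonneg fun i _ => pow_nonneg (ha i).le _
      have hD : 0 ≤ q ^ k' * P * A' :=
        mul_nonneg (mul_nonneg (pow_nonneg hq.le _) hP) hA'
      -- key inequality
      have hden : 0 < p + (1 - p) * q * amin := by
        have := mul_pos (mul_pos (by linarith : (0:ℝ) < 1 - p) hq) hamin_pos
        linarith
      have hdent : 0 < p + (1 - p) * q * t := by
        have := mul_pos (mul_pos (by linarith : (0:ℝ) < 1 - p) hq) ht0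
        linarith
      have hc2' : c ≤ (1 - p) * q * amin / (p + (1 - p) * q * amin) := by
        have : 1 - p / (p + (1 - p) * q * amin)
            = (1 - p) * q * amin / (p + (1 - p) * q * amin) := by
          have hne := hden.ne'
          field_simp
          ring
        linarith [hc2.trans_eq this]
      have hmono : (1 - p) * q * amin / (p + (1 - p) * q * amin)
          ≤ (1 - p) * q * t / (p + (1 - p) * q * t) := by
        rw [div_le_div_iff₀ hden hdent]
        nlinarith [mul_le_mul_of_nonneg_left ht
          (mul_nonneg (mul_nonneg hp0 (by linarith : (0:ℝ) ≤ 1 - p)) hq.le)]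
      have hkey : c * (p + (1 - p) * q * t) ≤ (1 - p) * q * t :=
        (le_div_iff₀ hdent).mp (hc2'.trans hmono)
      have := mul_le_mul_of_nonneg_right hkey hD
      rw [pow_succ]
      nlinarith [this]
  · have h0' : uW ends p q a τ η' = 0 := by unfold uW; rw [if_neg hcomp']
    have h0 : 0 ≤ uW ends p q a τ η := uW_nonneg ends hp0 hp1 hq ha τ η
    have hc1' : c ≤ 1 := by linarith
    rw [h0']
    nlinarith
end PerEdge
section Closing
open Finset Function

lemma closing_lemma {E : Type} [Fintype E] [DecidableEq E] (w : (E → Bool) → ℝ)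
    (hw : ∀ ξ, 0 ≤ w ξ) {c : ℝ} (hc : 0 < c)
    (hstep : ∀ ξ e, ξ e = false → c * (w ξ + w (Function.update ξ e true)) ≤ w ξ)
    (F : Finset E) : ∀ η : E → Bool, (∀ e ∈ F, η e = false) →
      c ^ F.card * ∑ ξ ∈ Finset.univ.filter (fun ξ => ∀ e ∉ F, ξ e = η e), w ξ ≤ w η := by
  classical
  induction F using Finset.induction_on with
  | empty =>
    intro η _
    have hset : Finset.univ.filter (fun ξ : E → Bool => ∀ e ∉ (∅ : Finset E), ξ e = η e)
        = {η} := by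
      ext ξ
      simp only [Finset.mem_filter, Finset.mem_univ, true_and, Finset.mem_singleton,
        Finset.notMem_empty, not_false_iff, forall_true_left]
      constructor
      · intro h; funext e; exact h e
      · intro h e; rw [h]
    rw [hset, Finset.sum_singleton, Finset.card_empty, pow_zero, one_mul]
  | @insert e F he ih =>
    intro η hηF
    have hηe : η e = false := hηF e (Finset.mem_insert_self e F)
    have hηF' : ∀ e' ∈ F, η e' = false := fun e' h => hηF e' (Finset.mem_insert_of_mem h)
    set S := Finset.univ.filter (fun ξ : E → Bool => ∀ e' ∉ F, ξ e' = η e') with hS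
    set S' := Finset.univ.filter
      (fun ξ : E → Bool => ∀ e' ∉ insert e F, ξ e' = η e') with hS'
    have hmemS : ∀ ξ : E → Bool, ξ ∈ S ↔ ∀ e' ∉ F, ξ e' = η e' := by
      intro ξ; simp [hS]
    have hmemS' : ∀ ξ : E → Bool, ξ ∈ S' ↔ ∀ e' ∉ insert e F, ξ e' = η e' := by
      intro ξ; simp [hS']
    have hSfalse : ∀ ξ ∈ S, ξ e = false := fun ξ hξ => ((hmemS ξ).mp hξ e he).trans hηe
    have hsplit : S' = S ∪ S.image (fun ξ => Function.update ξ e true) := by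
      ext ξ
      constructor
      · intro hξ
        have hξ' := (hmemS' ξ).mp hξ
        by_cases hb : ξ e = false
        · refine Finset.mem_union_left _ ((hmemS ξ).mpr fun e' he' => ?_)
          by_cases hee : e' = e
          · rw [hee, hb, hηe]
          · exact hξ' e' (by simp [hee, he'])
        · refine Finset.mem_union_right _ (Finset.mem_image.mpr
            ⟨Function.update ξ e false, (hmemS _).mpr fun e' he' => ?_, ?_⟩)
          · by_cases hee : e' = e
            · rw [hee, Function.update_self, hηe]
            · rw [Function.update_of_ne hee]
              exact hξ' e' (by simp [hee, he'])
          · have ht : ξ e = true := by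
              cases hcase : ξ e
              · exact absurd hcase hb
              · rfl
            funext e'
            by_cases hee : e' = e
            · subst hee
              rw [Function.update_self, ht]
            · rw [Function.update_of_ne hee, Function.update_of_ne hee]
      · intro hξ
        rcases Finset.mem_union.mp hξ with hξ | hξ
        · refine (hmemS' ξ).mpr fun e' he' => ?_
          exact (hmemS ξ).mp hξ e' fun hh => he' (Finset.mem_insert_of_mem hh)
        · obtain ⟨ξ₀, hξ₀, rfl⟩ := Finset.mem_image.mp hξ
          refine (hmemS' _).mpr fun e' he' => ?_
          have hee : e' ≠ e := fun hh => he' (hh ▸ Finset.mem_insert_self e F)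
          rw [Function.update_of_ne hee]
          exact (hmemS ξ₀).mp hξ₀ e' fun hh => he' (Finset.mem_insert_of_mem hh)
    have hdisj : Disjoint S (S.image (fun ξ => Function.update ξ e true)) := by
      rw [Finset.disjoint_left]
      intro ξ hξ hξ'
      obtain ⟨ξ₀, _, hξ₀⟩ := Finset.mem_image.mp hξ'
      have h1 : ξ e = false := hSfalse ξ hξ
      have h2 : ξ e = true := by rw [← hξ₀, Function.update_self]
      rw [h1] at h2; exact Bool.noConfusion h2
    have hinj : Set.InjOn (fun ξ : E → Bool => Function.update ξ e true) ↑S := by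
      intro ξ₁ h₁ ξ₂ h₂ heq
      funext e'
      by_cases hee : e' = e
      · rw [hee, hSfalse ξ₁ h₁, hSfalse ξ₂ h₂]
      · have := congrFun heq e'
        dsimp only at this
        rwa [Function.update_of_ne hee, Function.update_of_ne hee] at this
    have hsum : ∑ ξ ∈ S', w ξ
        = ∑ ξ ∈ S, (w ξ + w (Function.update ξ e true)) := by
      rw [hsplit, Finset.sum_union hdisj, Finset.sum_image hinj, ← Finset.sum_add_distrib]
    rw [Finset.card_insert_of_notMem he, pow_succ]
    have step : c * ∑ ξ ∈ S, (w ξ + w (Function.update ξ e true)) ≤ ∑ ξ ∈ S, w ξ := by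
      rw [Finset.mul_sum]
      exact Finset.sum_le_sum fun ξ hξ => hstep ξ e (hSfalse ξ hξ)
    calc c ^ F.card * c * ∑ ξ ∈ S', w ξ
        = c ^ F.card * (c * ∑ ξ ∈ S, (w ξ + w (Function.update ξ e true))) := by
          rw [hsum]; ring
      _ ≤ c ^ F.card * ∑ ξ ∈ S, w ξ :=
          mul_le_mul_of_nonneg_left step (pow_nonneg hc.le _)
      _ ≤ w η := ih η hηF'
end Closing
section Isolated
open Relation Function Finset

variable {V E : Type} [Fintype V] [DecidableEq V] [Fintype E] [DecidableEq E]
  (ends : E → V × V) {p q : ℝ} {s : ℕ} {a : Fin s → ℝ}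

lemma isolated_eqv (v : V) (η : E → Bool)
    (hcl : ∀ e, ((ends e).1 = v ∨ (ends e).2 = v) → η e = false) :
    ∀ u w, EqvGen (openRel ends η) u w → (u = v ↔ w = v) := by
  intro u w h
  induction h with
  | rel u w h =>
    obtain ⟨e, he, h1, h2⟩ := h
    constructor
    · rintro rfl
      rw [hcl e (Or.inl h1)] at he; exact Bool.noConfusion he
    · rintro rfl
      rw [hcl e (Or.inr h2)] at he; exact Bool.noConfusion he
  | refl u => exact Iff.rfl
  | symm u w _ ih => exact ih.symm
  | trans u x w _ _ ih1 ih2 => exact ih1.trans ih2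

/-- For `η` closed at `v`, the weight of the configuration with spin `m` at `v`
equals `a m` times the sum over all spins at `v`. -/
lemma uW_isolated (hq : 0 < q) (ha : ∀ i, 0 < a i) (hsum : ∑ i : Fin s, a i = 1)
    (v : V) (τ : Fin s → V → Fin s) (hτv : ∀ b, τ b v = b)
    (hτ : ∀ b b' w, w ≠ v → τ b w = τ b' w)
    (η : E → Bool) (hcl : ∀ e, ((ends e).1 = v ∨ (ends e).2 = v) → η e = false)
    (m : Fin s) :
    uW ends p q a (τ m) η = a m * ∑ b : Fin s, uW ends p q a (τ b) η := by
  classical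
  have hiso := isolated_eqv ends v η hcl
  set r := openRel ends η with hr
  -- the key cross identity
  have key : ∀ b m : Fin s, a m * uW ends p q a (τ b) η = a b * uW ends p q a (τ m) η := by
    have main : ∀ b m : Fin s, compatible ends η (τ m) →
        a m * uW ends p q a (τ b) η = a b * uW ends p q a (τ m) η := by
      intro b m hm
      have hb : compatible ends η (τ b) := by
        intro u w h
        by_cases hu : u = v
        · have hw : w = v := (hiso u w h).mp hu
          rw [hu, hw]
        · have hw : w ≠ v := fun hh => hu ((hiso u w h).mpr hh)
          rw [hτ b m u hu, hτ b m w hw]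
          exact hm u w h
      -- spin component counts
      have hcnt : ∀ b : Fin s, ∀ i : Fin s,
          spinCompCount ends η (τ b) i
            = Nat.card {c : Quot r // ∃ z, Quot.mk r z = c ∧ z ≠ v ∧ τ m z = i}
              + (if i = b then 1 else 0) := by
        intro b i
        by_cases hib : i = b
        · rw [if_pos hib]
          unfold spinCompCount
          have hpred : ∀ c : Quot r, (∃ z, Quot.mk r z = c ∧ τ b z = i)
              ↔ ((∃ z, Quot.mk r z = c ∧ z ≠ v ∧ τ m z = i) ∨ c = Quot.mk r v) := by
            intro c
            constructor
            · rintro ⟨z, hz, hzi⟩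
              by_cases hzv : z = v
              · exact Or.inr (by rw [← hz, hzv])
              · exact Or.inl ⟨z, hz, hzv, by rw [hτ m b z hzv]; exact hzi⟩
            · rintro (⟨z, hz, hzv, hzi⟩ | rfl)
              · exact ⟨z, hz, by rw [hτ b m z hzv]; exact hzi⟩
              · exact ⟨v, rfl, by rw [hτv]; exact hib.symm⟩
          have hdisj : ∀ c : Quot r, ¬((∃ z, Quot.mk r z = c ∧ z ≠ v ∧ τ m z = i)
              ∧ c = Quot.mk r v) := by
            rintro c ⟨⟨z, hz, hzv, _⟩, rfl⟩
            exact hzv ((hiso z v (Quot.eq.mp hz)).mpr rfl)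
          have hdisj' : Disjoint (fun c : Quot r => ∃ z, Quot.mk r z = c ∧ z ≠ v ∧ τ m z = i)
              (fun c : Quot r => c = Quot.mk r v) := by
            rw [Pi.disjoint_iff]
            intro c
            rw [Prop.disjoint_iff]
            exact hdisj c
          calc Nat.card {c : Quot r // ∃ z, Quot.mk r z = c ∧ τ b z = i}
              = Nat.card {c : Quot r // (∃ z, Quot.mk r z = c ∧ z ≠ v ∧ τ m z = i)
                  ∨ c = Quot.mk r v} := Nat.card_congr (Equiv.subtypeEquivRight hpred)
            _ = Nat.card ({c : Quot r // ∃ z, Quot.mk r z = c ∧ z ≠ v ∧ τ m z = i}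
                  ⊕ {c : Quot r // c = Quot.mk r v}) :=
                Nat.card_congr (subtypeOrEquiv _ _ hdisj')
            _ = Nat.card {c : Quot r // ∃ z, Quot.mk r z = c ∧ z ≠ v ∧ τ m z = i} + 1 := by
                rw [Nat.card_sum]
                congr 1
                haveI := Fintype.ofFinite (Quot r)
                rw [Nat.card_eq_fintype_card, Fintype.card_subtype_eq]
        · rw [if_neg hib, add_zero]
          unfold spinCompCount
          refine Nat.card_congr (Equiv.subtypeEquivRight fun c => ?_)
          constructor
          · rintro ⟨z, hz, hzi⟩
            have hzv : z ≠ v := fun hh => hib (by rw [← hzi, hh, hτv b])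
            exact ⟨z, hz, hzv, by rw [hτ m b z hzv]; exact hzi⟩
          · rintro ⟨z, hz, hzv, hzi⟩
            exact ⟨z, hz, by rw [hτ b m z hzv]; exact hzi⟩
      have hprodcnt : ∀ b : Fin s,
          (∏ i : Fin s, a i ^ spinCompCount ends η (τ b) i)
            = a b * ∏ i : Fin s,
                a i ^ Nat.card {c : Quot r // ∃ z, Quot.mk r z = c ∧ z ≠ v ∧ τ m z = i} := by
        intro b
        have : ∀ i : Fin s, a i ^ spinCompCount ends η (τ b) i
            = a i ^ Nat.card {c : Quot r // ∃ z, Quot.mk r z = c ∧ z ≠ v ∧ τ m z = i}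
              * (if i = b then a i else 1) := by
          intro i
          rw [hcnt b i, pow_add]
          by_cases hib : i = b
          · rw [if_pos hib, if_pos hib, pow_one]
          · rw [if_neg hib, if_neg hib, pow_zero]
        rw [Finset.prod_congr rfl (fun i _ => this i), Finset.prod_mul_distrib,
          Finset.prod_ite_eq' univ b a, if_pos (mem_univ _)]
        ring
      unfold uW
      rw [if_pos hb, if_pos hm, hprodcnt b, hprodcnt m]
      ring
    intro b m
    by_cases hm : compatible ends η (τ m)
    · exact main b m hm
    · by_cases hbc : compatible ends η (τ b)
      · exact (main m b hbc).symm
      · unfold uW; rw [if_neg hm, if_neg hbc]; ring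
  calc uW ends p q a (τ m) η = (∑ b : Fin s, a b) * uW ends p q a (τ m) η := by
        rw [hsum, one_mul]
    _ = ∑ b : Fin s, a b * uW ends p q a (τ m) η := by rw [Finset.sum_mul]
    _ = ∑ b : Fin s, a m * uW ends p q a (τ b) η := by
        refine Finset.sum_congr rfl fun b _ => (key b m).symm
    _ = a m * ∑ b : Fin s, uW ends p q a (τ b) η := by rw [Finset.mul_sum]
end Isolated

/-- uniform nonnullness of the DaC model on a finite graph. For
every vertex `v`, spin `m`, and spin configuration `σ` off `v`, the conditional
probability that `v` receives spin `m` given spins `σ` elsewhere is at least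
`ε = (min_i a_i)·(min{1-p, 1-p/(p+(1-p)q·min_i a_i)})^{deg v} > 0`. -/
theorem dac_uniformly_nonnull {V E : Type}
    [Fintype V] [DecidableEq V] [Fintype E] [DecidableEq E]
    (ends : E → V × V) (p q : ℝ) (hp : p ∈ Set.Ico (0 : ℝ) 1) (hq : 0 < q)
    (s : ℕ) (hs : 2 ≤ s) (a : Fin s → ℝ) (ha : ∀ i, a i ∈ Set.Ioo (0 : ℝ) 1)
    (hsum : ∑ i : Fin s, a i = 1)
    (v : V) (m : Fin s) (σ : {w : V // w ≠ v} → Fin s) :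
    let ext : Fin s → V → Fin s := fun b w => if h : w = v then b else σ ⟨w, h⟩
    let deg : ℕ := (Finset.univ.filter fun e : E => (ends e).1 = v ∨ (ends e).2 = v).card
    let amin : ℝ := ⨅ i, a i
    let ε : ℝ := amin * min (1 - p) (1 - p / (p + (1 - p) * q * amin)) ^ deg
    0 < ε ∧
      ε ≤ (∑ η : E → Bool, dacP ends p q a (ext m) η)
            / (∑ b : Fin s, ∑ η : E → Bool, dacP ends p q a (ext b) η) := by
  classical
  intro ext deg amin ε
  obtain ⟨hp0, hp1⟩ := hp
  have ha0 : ∀ i, 0 < a i := fun i => (ha i).1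
  haveI : Nonempty (Fin s) := ⟨⟨0, by omega⟩⟩
  -- facts about amin
  have hamin_le : ∀ i, amin ≤ a i := fun i =>
    ciInf_le (Set.Finite.bddBelow (Set.finite_range a)) i
  have hamin_pos : 0 < amin := by
    obtain ⟨j, hj⟩ := exists_eq_ciInf_of_finite (f := a)
    rw [show amin = ⨅ i, a i from rfl, ← hj]
    exact ha0 j
  -- facts about c
  set c : ℝ := min (1 - p) (1 - p / (p + (1 - p) * q * amin)) with hcdef
  have hden : 0 < p + (1 - p) * q * amin := by
    have := mul_pos (mul_pos (by linarith : (0:ℝ) < 1 - p) hq) hamin_pos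
    linarith
  have hc0 : 0 < c := by
    refine lt_min (by linarith) ?_
    rw [sub_pos, div_lt_one hden]
    have := mul_pos (mul_pos (by linarith : (0:ℝ) < 1 - p) hq) hamin_pos
    linarith
  have hc1 : c ≤ 1 - p := min_le_left _ _
  have hc2 : c ≤ 1 - p / (p + (1 - p) * q * amin) := min_le_right _ _
  have hεpos : 0 < ε := mul_pos hamin_pos (pow_pos hc0 _)
  refine ⟨hεpos, ?_⟩
  -- ext properties
  have hextv : ∀ b, ext b v = b := fun b => dif_pos rfl
  have hextne : ∀ b b' (w : V), w ≠ v → ext b w = ext b' w := by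
    intro b b' w hw
    show (if h : w = v then b else σ ⟨w, h⟩) = (if h : w = v then b' else σ ⟨w, h⟩)
    rw [dif_neg hw, dif_neg hw]
  -- Z positivity
  have hZnn : ∀ η : E → Bool, 0 ≤ rcWeight ends p q η := by
    intro η
    exact mul_nonneg (pow_nonneg hq.le _)
      (Finset.prod_nonneg fun e _ => by split <;> linarith)
  have hZpos : 0 < rcZ ends p q := by
    refine Finset.sum_pos' (fun η _ => hZnn η) ⟨fun _ => false, Finset.mem_univ _, ?_⟩
    refine mul_pos (pow_pos hq _) (Finset.prod_pos fun e _ => ?_)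
    simp only [Bool.false_eq_true, if_false]
    linarith
  -- dacP in terms of uW
  have hdac : ∀ (τ : V → Fin s) (η : E → Bool),
      dacP ends p q a τ η = uW ends p q a τ η / rcZ ends p q := by
    intro τ η
    unfold dacP uW rcMeasure rcWeight
    by_cases h : compatible ends η τ
    · rw [if_pos h, if_pos h]; ring
    · rw [if_neg h, if_neg h, zero_div]
  -- abbreviations
  set W : Fin s → (E → Bool) → ℝ := fun b η => uW ends p q a (ext b) η with hWdef
  have hW0 : ∀ b η, 0 ≤ W b η := fun b η => uW_nonneg ends hp0 hp1 hq ha0 (ext b) η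
  set F : Finset E := Finset.univ.filter (fun e : E => (ends e).1 = v ∨ (ends e).2 = v)
    with hFdef
  have hdegF : deg = F.card := rfl
  set X : ℝ := ∑ η : E → Bool, W m η with hXdef
  set Y : ℝ := ∑ b : Fin s, ∑ η : E → Bool, W b η with hYdef
  have hYpos : 0 < Y := by
    refine Finset.sum_pos' (fun b _ => Finset.sum_nonneg fun η _ => hW0 b η)
      ⟨m, Finset.mem_univ _, ?_⟩
    refine Finset.sum_pos' (fun η _ => hW0 m η) ⟨fun _ => false, Finset.mem_univ _, ?_⟩
    have hcomp : compatible ends (fun _ => false) (ext m) := by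
      intro u w h
      have : u = w := by
        induction h with
        | rel u w h => obtain ⟨e, he, -, -⟩ := h; exact Bool.noConfusion he
        | refl u => rfl
        | symm u w _ ih => exact ih.symm
        | trans u x w _ _ ih1 ih2 => exact ih1.trans ih2
      rw [this]
    show 0 < uW ends p q a (ext m) (fun _ => false)
    unfold uW
    rw [if_pos hcomp]
    refine mul_pos (mul_pos (pow_pos hq _) (Finset.prod_pos fun e _ => ?_))
      (Finset.prod_pos fun i _ => pow_pos (ha0 i) _)
    simp only [Bool.false_eq_true, if_false]
    linarith
  -- the closure map
  set cl : (E → Bool) → (E → Bool) := fun η e => if e ∈ F then false else η e with hcldef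
  have hclF : ∀ η e, e ∈ F → cl η e = false := fun η e he => if_pos he
  have hclnF : ∀ η e, e ∉ F → cl η e = η e := fun η e he => if_neg he
  have hclid : ∀ η, cl (cl η) = cl η := by
    intro η; funext e
    by_cases he : e ∈ F
    · rw [hclF _ e he, hclF _ e he]
    · rw [hclnF _ e he]
  -- the key per-fiber inequality
  have hkey : ∀ η' : E → Bool,
      ε * ∑ η ∈ Finset.univ.filter (fun η => cl η = η'), (∑ b : Fin s, W b η)
        ≤ ∑ η ∈ Finset.univ.filter (fun η => cl η = η'), W m η := by
    intro η'
    by_cases hfix : cl η' = η'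
    · have hclosedF : ∀ e ∈ F, η' e = false := by
        intro e he
        rw [← hfix]; exact hclF η' e he
      have hclosed : ∀ e, ((ends e).1 = v ∨ (ends e).2 = v) → η' e = false := by
        intro e he
        exact hclosedF e (Finset.mem_filter.mpr ⟨Finset.mem_univ _, he⟩)
      have hmemfix : η' ∈ Finset.univ.filter (fun η => cl η = η') :=
        Finset.mem_filter.mpr ⟨Finset.mem_univ _, hfix⟩
      -- step 4 : single term
      have t4 : W m η' ≤ ∑ η ∈ Finset.univ.filter (fun η => cl η = η'), W m η :=
        Finset.single_le_sum (fun η _ => hW0 m η) hmemfix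
      -- step 2 : isolated vertex
      have t2 : W m η' = a m * ∑ b : Fin s, W b η' :=
        uW_isolated ends hq ha0 hsum v ext hextv hextne η' hclosed m
      -- step 3 : closing lemma
      have hstep : ∀ (ξ : E → Bool) (e : E), ξ e = false →
          c * ((∑ b : Fin s, W b ξ) + ∑ b : Fin s, W b (Function.update ξ e true))
            ≤ ∑ b : Fin s, W b ξ := by
        intro ξ e hξe
        rw [← Finset.sum_add_distrib, Finset.mul_sum]
        exact Finset.sum_le_sum fun b _ =>
          uW_update_le ends hp0 hp1 hq ha0 hamin_pos hamin_le hc0 hc1 hc2 (ext b) ξ e hξe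
      have t3 : c ^ deg * ∑ ξ ∈ Finset.univ.filter (fun ξ => ∀ e ∉ F, ξ e = η' e),
          (∑ b : Fin s, W b ξ) ≤ ∑ b : Fin s, W b η' := by
        rw [hdegF]
        exact closing_lemma (fun ξ => ∑ b : Fin s, W b ξ)
          (fun ξ => Finset.sum_nonneg fun b _ => hW0 b ξ) hc0 hstep F η' hclosedF
      -- step 1 : fiber is contained in the closing set
      have t1 : ∑ η ∈ Finset.univ.filter (fun η => cl η = η'), (∑ b : Fin s, W b η)
          ≤ ∑ ξ ∈ Finset.univ.filter (fun ξ => ∀ e ∉ F, ξ e = η' e), (∑ b : Fin s, W b ξ) := by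
        refine Finset.sum_le_sum_of_subset_of_nonneg ?_
          (fun ξ _ _ => Finset.sum_nonneg fun b _ => hW0 b ξ)
        intro η hη
        obtain ⟨-, hη⟩ := Finset.mem_filter.mp hη
        refine Finset.mem_filter.mpr ⟨Finset.mem_univ _, fun e he => ?_⟩
        exact (hclnF η e he).symm ▸ (hη ▸ rfl)
      calc ε * ∑ η ∈ Finset.univ.filter (fun η => cl η = η'), (∑ b : Fin s, W b η)
          = amin * (c ^ deg * ∑ η ∈ Finset.univ.filter (fun η => cl η = η'),
              (∑ b : Fin s, W b η)) := by rw [show ε = amin * c ^ deg from rfl]; ring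
        _ ≤ amin * (c ^ deg * ∑ ξ ∈ Finset.univ.filter (fun ξ => ∀ e ∉ F, ξ e = η' e),
              (∑ b : Fin s, W b ξ)) := by
            refine mul_le_mul_of_nonneg_left
              (mul_le_mul_of_nonneg_left t1 (pow_nonneg hc0.le _)) hamin_pos.le
        _ ≤ amin * ∑ b : Fin s, W b η' :=
            mul_le_mul_of_nonneg_left t3 hamin_pos.le
        _ ≤ a m * ∑ b : Fin s, W b η' :=
            mul_le_mul_of_nonneg_right (hamin_le m)
              (Finset.sum_nonneg fun b _ => hW0 b η')
        _ = W m η' := t2.symm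
        _ ≤ ∑ η ∈ Finset.univ.filter (fun η => cl η = η'), W m η := t4
    · have hempty : Finset.univ.filter (fun η : E → Bool => cl η = η') = ∅ := by
        refine Finset.filter_eq_empty_iff.mpr fun {η} _ hη => ?_
        exact hfix (by rw [← hη, hclid])
      rw [hempty, Finset.sum_empty, Finset.sum_empty, mul_zero]
  -- assemble
  have hXY : ε * Y ≤ X := by
    have hYfib : Y = ∑ η' : E → Bool,
        ∑ η ∈ Finset.univ.filter (fun η => cl η = η'), (∑ b : Fin s, W b η) := by
      rw [hYdef, Finset.sum_comm, Finset.sum_fiberwise Finset.univ cl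
        (fun η => ∑ b : Fin s, W b η)]
    have hXfib : X = ∑ η' : E → Bool,
        ∑ η ∈ Finset.univ.filter (fun η => cl η = η'), W m η := by
      rw [hXdef, Finset.sum_fiberwise Finset.univ cl (fun η => W m η)]
    rw [hYfib, hXfib, Finset.mul_sum]
    exact Finset.sum_le_sum fun η' _ => hkey η'
  have hnum : (∑ η : E → Bool, dacP ends p q a (ext m) η) = X / rcZ ends p q := by
    rw [hXdef, Finset.sum_div]
    exact Finset.sum_congr rfl fun η _ => hdac _ η
  have hden2 : (∑ b : Fin s, ∑ η : E → Bool, dacP ends p q a (ext b) η)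
      = Y / rcZ ends p q := by
    rw [hYdef, Finset.sum_div]
    refine Finset.sum_congr rfl fun b _ => ?_
    rw [Finset.sum_div]
    exact Finset.sum_congr rfl fun η _ => hdac _ η
  rw [hnum, hden2]
  have hZne := hZpos.ne'
  have hquot : X / rcZ ends p q / (Y / rcZ ends p q) = X / Y := by
    field_simp
  rw [hquot, le_div_iff₀ hYpos]
  exact hXY
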